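/- For the 2-step nilpotent Lie algebra g determined by a finite simple graph G(V,E), every almost inner derivation is inner: AID(g) = Inn(g). -/

import Mathlib

set_option linter.unusedSectionVars false

namespace Stmt15Aux

variable {K L : Type*} [Field K] [LieRing L] [LieAlgebra K L]
  {r : ℕ} {G : SimpleGraph (Fin r)} [DecidableRel G.Adj]

def eps (K : Type*) [Field K] (j i : Fin r) : K := if j < i then 1 else -1

lemma eps_sq (j i : Fin r) : eps K j i * eps K j i = 1 := by
  unfold eps; split <;> norm_num

variable (b : Module.Basis (Fin r ⊕ G.edgeSet) K L)

noncomputable def auxF (i : Fin r) (t : Fin r ⊕ G.edgeSet) : L →ₗ[K] K :=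
  -((b.coord t) ∘ₗ (LieAlgebra.ad K L (b (Sum.inl i)) : L →ₗ[K] L))

lemma auxF_apply (i : Fin r) (t : Fin r ⊕ G.edgeSet) (z : L) :
    auxF b i t z = b.repr ⁅z, b (Sum.inl i)⁆ t := by
  simp only [auxF, LinearMap.neg_apply, LinearMap.coe_comp, Function.comp_apply,
    LieAlgebra.ad_apply, Module.Basis.coord_apply]
  rw [← lie_skew, map_neg, Finsupp.neg_apply, neg_neg]

lemma lie_basis_vertex
    (hadj : ∀ i j : Fin r, i < j → ∀ h : G.Adj i j,
      ⁅b (Sum.inl i), b (Sum.inl j)⁆ = b (Sum.inr ⟨s(i, j), G.mem_edgeSet.mpr h⟩))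
    (j i : Fin r) (h : G.Adj j i) :
    ⁅b (Sum.inl j), b (Sum.inl i)⁆
      = eps K j i • b (Sum.inr ⟨s(j, i), G.mem_edgeSet.mpr h⟩) := by
  rcases lt_or_gt_of_ne h.ne with hlt | hgt
  · rw [hadj j i hlt h]
    rw [eps, if_pos hlt, one_smul]
  · have h2 := hadj i j hgt h.symm
    have he : (⟨s(i, j), G.mem_edgeSet.mpr h.symm⟩ : G.edgeSet)
        = ⟨s(j, i), G.mem_edgeSet.mpr h⟩ := Subtype.ext (Sym2.eq_swap)
    rw [eps, if_neg (not_lt.mpr hgt.le), ← lie_skew, h2, he, neg_one_smul]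

section
variable
    (hadj : ∀ i j : Fin r, i < j → ∀ h : G.Adj i j,
      ⁅b (Sum.inl i), b (Sum.inl j)⁆ = b (Sum.inr ⟨s(i, j), G.mem_edgeSet.mpr h⟩))
    (hnadj : ∀ i j : Fin r, ¬ G.Adj i j → ⁅b (Sum.inl i), b (Sum.inl j)⁆ = 0)
    (hcent : ∀ e : G.edgeSet, ∀ z : L, ⁅b (Sum.inr e), z⁆ = 0)

include hadj hnadj hcent

lemma repr_lie_inl (i m : Fin r) (z : L) :
    b.repr ⁅z, b (Sum.inl i)⁆ (Sum.inl m) = 0 := by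
  rw [← auxF_apply]
  have h0 : auxF b i (Sum.inl m) = (0 : L →ₗ[K] K) := by
    apply b.ext
    rintro (j | e)
    · rw [auxF_apply]
      by_cases h : G.Adj j i
      · rw [lie_basis_vertex b hadj j i h]
        simp [Finsupp.single_apply]
      · rw [hnadj j i h]; simp
    · rw [auxF_apply, hcent e]; simp
  rw [h0]; rfl

lemma repr_lie_not_mem (i : Fin r) (e : G.edgeSet) (hie : i ∉ (e : Sym2 (Fin r))) (z : L) :
    b.repr ⁅z, b (Sum.inl i)⁆ (Sum.inr e) = 0 := by
  rw [← auxF_apply]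
  have h0 : auxF b i (Sum.inr e) = (0 : L →ₗ[K] K) := by
    apply b.ext
    rintro (j | e')
    · rw [auxF_apply]
      by_cases h : G.Adj j i
      · rw [lie_basis_vertex b hadj j i h]
        have hne : (⟨s(j, i), G.mem_edgeSet.mpr h⟩ : G.edgeSet) ≠ e := by
          intro hh
          apply hie
          rw [← hh]
          exact Sym2.mem_mk_right j i
        simp [Finsupp.single_apply, hne]
      · rw [hnadj j i h]; simp
    · rw [auxF_apply, hcent e']; simp
  rw [h0]; rfl

lemma repr_lie_mem (i j : Fin r) (h : G.Adj j i) (z : L) :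
    b.repr ⁅z, b (Sum.inl i)⁆ (Sum.inr ⟨s(j, i), G.mem_edgeSet.mpr h⟩)
      = eps K j i * b.repr z (Sum.inl j) := by
  rw [← auxF_apply]
  have h0 : auxF b i (Sum.inr ⟨s(j, i), G.mem_edgeSet.mpr h⟩)
      = eps K j i • (b.coord (Sum.inl j)) := by
    apply b.ext
    rintro (m | e')
    · rw [auxF_apply]
      by_cases hm : G.Adj m i
      · rw [lie_basis_vertex b hadj m i hm]
        by_cases hmj : m = j
        · subst hmj
          simp [Finsupp.single_apply]
        · have hne : (⟨s(m, i), G.mem_edgeSet.mpr hm⟩ : G.edgeSet)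
              ≠ ⟨s(j, i), G.mem_edgeSet.mpr h⟩ := by
            intro hh
            have := Subtype.ext_iff.mp hh
            rw [Sym2.eq_iff] at this
            rcases this with ⟨h1, _⟩ | ⟨h1, h2⟩
            · exact hmj h1
            · exact hm.ne h1
          simp [Finsupp.single_apply, hne, hmj]
      · rw [hnadj m i hm]
        have hmj : m ≠ j := by rintro rfl; exact hm h
        simp [Finsupp.single_apply, hmj]
    · rw [auxF_apply, hcent e']
      simp
  rw [h0]
  simp [Module.Basis.coord_apply]

end
end Stmt15Aux

/-- For the 2-step nilpotent Lie algebra determined by a finite simple graph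
(vertices and edges form a basis, `⁅x_i, x_j⁆ = y_{i,j}` for each edge with
`i < j`, all other brackets of basis vectors zero), every almost inner
derivation is inner: `AID(g) = Inn(g)`. -/
theorem stmt15 {K L : Type*} [Field K] [LieRing L] [LieAlgebra K L]
    (r : ℕ) (G : SimpleGraph (Fin r)) [DecidableRel G.Adj]
    (b : Module.Basis (Fin r ⊕ G.edgeSet) K L)
    (hadj : ∀ i j : Fin r, i < j → ∀ h : G.Adj i j,
      ⁅b (Sum.inl i), b (Sum.inl j)⁆ = b (Sum.inr ⟨s(i, j), G.mem_edgeSet.mpr h⟩))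
    (hnadj : ∀ i j : Fin r, ¬ G.Adj i j → ⁅b (Sum.inl i), b (Sum.inl j)⁆ = 0)
    (hcent : ∀ e : G.edgeSet, ∀ z : L, ⁅b (Sum.inr e), z⁆ = 0)
    (D : LieDerivation K L L) (hD : ∀ x : L, ∃ y : L, D x = ⁅y, x⁆) :
    ∃ y : L, ∀ x : L, D x = ⁅y, x⁆ := by
  classical
  choose w hw using fun i : Fin r => hD (b (Sum.inl i))
  -- consistency of edge coefficients
  have key : ∀ (j i i' : Fin r) (h : G.Adj j i) (h' : G.Adj j i'),
      Stmt15Aux.eps K j i * b.repr (D (b (Sum.inl i))) (Sum.inr ⟨s(j, i), G.mem_edgeSet.mpr h⟩)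
        = Stmt15Aux.eps K j i' *
            b.repr (D (b (Sum.inl i'))) (Sum.inr ⟨s(j, i'), G.mem_edgeSet.mpr h'⟩) := by
    intro j i i' h h'
    rcases eq_or_ne i i' with rfl | hii
    · rfl
    obtain ⟨z, hz⟩ := hD (b (Sum.inl i) + b (Sum.inl i'))
    have hzz : D (b (Sum.inl i)) + D (b (Sum.inl i'))
        = ⁅z, b (Sum.inl i)⁆ + ⁅z, b (Sum.inl i')⁆ := by
      rw [← lie_add, ← hz, map_add]
    have main : ∀ (i₁ i₂ : Fin r) (h₁ : G.Adj j i₁), i₂ ≠ i₁ → G.Adj j i₂ →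
        (D (b (Sum.inl i₁)) + D (b (Sum.inl i₂))
          = ⁅z, b (Sum.inl i₁)⁆ + ⁅z, b (Sum.inl i₂)⁆) →
        Stmt15Aux.eps K j i₁ *
            b.repr (D (b (Sum.inl i₁))) (Sum.inr ⟨s(j, i₁), G.mem_edgeSet.mpr h₁⟩)
          = b.repr z (Sum.inl j) := by
      intro i₁ i₂ h₁ hne h₂ heq
      have hnm : i₂ ∉ (s(j, i₁) : Sym2 (Fin r)) := by
        rw [Sym2.mem_iff]
        rintro (rfl | rfl)
        · exact h₂.ne rfl
        · exact hne rfl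
      have t2 : b.repr (D (b (Sum.inl i₂))) (Sum.inr ⟨s(j, i₁), G.mem_edgeSet.mpr h₁⟩) = 0 := by
        rw [hw i₂]
        exact Stmt15Aux.repr_lie_not_mem b hadj hnadj hcent i₂ _ hnm (w i₂)
      have t3 : b.repr ⁅z, b (Sum.inl i₂)⁆ (Sum.inr ⟨s(j, i₁), G.mem_edgeSet.mpr h₁⟩) = 0 :=
        Stmt15Aux.repr_lie_not_mem b hadj hnadj hcent i₂ _ hnm z
      have t1 : b.repr ⁅z, b (Sum.inl i₁)⁆ (Sum.inr ⟨s(j, i₁), G.mem_edgeSet.mpr h₁⟩)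
          = Stmt15Aux.eps K j i₁ * b.repr z (Sum.inl j) :=
        Stmt15Aux.repr_lie_mem b hadj hnadj hcent i₁ j h₁ z
      have hmain : b.repr (D (b (Sum.inl i₁))) (Sum.inr ⟨s(j, i₁), G.mem_edgeSet.mpr h₁⟩)
          = Stmt15Aux.eps K j i₁ * b.repr z (Sum.inl j) := by
        have := congrArg (fun v => b.repr v
          (Sum.inr (⟨s(j, i₁), G.mem_edgeSet.mpr h₁⟩ : G.edgeSet))) heq
        simp only [map_add, Finsupp.add_apply] at this
        rw [t2, t3, t1, add_zero, add_zero] at this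
        exact this
      rw [hmain, ← mul_assoc, Stmt15Aux.eps_sq, one_mul]
    rw [main i i' h hii.symm h' hzz, main i' i h' hii h (by rw [add_comm (D _), hzz, add_comm])]
  -- define the coefficients
  have haex : ∃ a : Fin r → K, ∀ (j i : Fin r) (h : G.Adj j i),
      Stmt15Aux.eps K j i * b.repr (D (b (Sum.inl i))) (Sum.inr ⟨s(j, i), G.mem_edgeSet.mpr h⟩)
        = a j := by
    refine ⟨fun j => if h : ∃ i, G.Adj j i then
      Stmt15Aux.eps K j h.choose * b.repr (D (b (Sum.inl h.choose)))
        (Sum.inr ⟨s(j, h.choose), G.mem_edgeSet.mpr h.choose_spec⟩) else 0, ?_⟩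
    intro j i h
    have hex : ∃ i', G.Adj j i' := ⟨i, h⟩
    dsimp only
    rw [dif_pos hex]
    exact key j i hex.choose h hex.choose_spec
  obtain ⟨a, ha⟩ := haex
  set y : L := ∑ j : Fin r, a j • b (Sum.inl j) with hydef
  have hyrepr : ∀ t, b.repr y t = Sum.elim a (fun _ => 0) t := by
    intro t
    rw [hydef, map_sum]
    simp only [map_smul, Module.Basis.repr_self, Finsupp.smul_single, smul_eq_mul, mul_one]
    rw [Finsupp.finset_sum_apply]
    rcases t with m | e
    · simp [Finsupp.single_apply]
    · simp [Finsupp.single_apply]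
  have hbasis : ∀ t, D (b t) = ⁅y, b t⁆ := by
    rintro (i | e)
    · apply b.repr.injective
      ext t
      rcases t with m | e
      · rw [hw i, Stmt15Aux.repr_lie_inl b hadj hnadj hcent i m (w i),
          Stmt15Aux.repr_lie_inl b hadj hnadj hcent i m y]
      · by_cases hie : i ∈ (e : Sym2 (Fin r))
        · obtain ⟨j', hj'⟩ := Sym2.mem_iff_exists.mp hie
          have hadj' : G.Adj i j' := G.mem_edgeSet.mp (by rw [← hj']; exact e.2)
          have hE : e = ⟨s(j', i), G.mem_edgeSet.mpr hadj'.symm⟩ :=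
            Subtype.ext (by rw [hj']; exact Sym2.eq_swap)
          rw [hE, Stmt15Aux.repr_lie_mem b hadj hnadj hcent i j' hadj'.symm y,
            hyrepr (Sum.inl j')]
          simp only [Sum.elim_inl]
          rw [← ha j' i hadj'.symm, ← mul_assoc, Stmt15Aux.eps_sq, one_mul]
        · rw [hw i, Stmt15Aux.repr_lie_not_mem b hadj hnadj hcent i e hie (w i),
            Stmt15Aux.repr_lie_not_mem b hadj hnadj hcent i e hie y]
    · obtain ⟨z, hz⟩ := hD (b (Sum.inr e))
      rw [hz, ← lie_skew, hcent e z, neg_zero, ← lie_skew, hcent e y, neg_zero]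
  refine ⟨y, fun v => ?_⟩
  have hDlin : D.toLinearMap = (LieAlgebra.ad K L y : L →ₗ[K] L) :=
    b.ext (fun t => by simpa using hbasis t)
  simpa using LinearMap.congr_fun hDlin v
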